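/- Under the hypotheses of the two-domain semi-discrete SBP–SAT advection scheme — a > 0; σ ≤ a/2; P_L, P_R diagonal positive definite; Q_L + Q_Lᵀ and Q_R + Q_Rᵀ equal to diag(−1,0,…,0,1) of the respective sizes; u'(t) = −a P_L⁻¹ Q_L u(t) + σ P_L⁻¹ e_N (u_N(t) − v_0(t)) − a P_L⁻¹ e_0 u_0(t) and v'(t) = −a P_R⁻¹ Q_R v(t) + (σ − a) P_R⁻¹ ê_0 (v_0(t) − u_N(t)) (i.e., homogeneous boundary data g_L ≡ 0) — the discrete energy t ↦ u(t)ᵀ P_L u(t) + v(t)ᵀ P_R v(t) is nonincreasing in t; in particular the scheme is energy stable. -/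

import Mathlib

open Matrix

noncomputable def sbpBoundaryMatrix (n : ℕ) : Matrix (Fin (n + 1)) (Fin (n + 1)) ℝ :=
  Matrix.diagonal fun i => (if i = Fin.last n then (1 : ℝ) else 0) + (if i = 0 then -1 else 0)

lemma sbp_quad (n : ℕ) (x : Fin (n+1) → ℝ) :
    x ⬝ᵥ (sbpBoundaryMatrix n *ᵥ x) = x (Fin.last n)^2 - x 0^2 := by
  simp [sbpBoundaryMatrix, mulVec_diagonal, dotProduct, mul_add, add_mul, mul_comm, mul_assoc,
    Finset.sum_add_distrib, apply_ite (fun r => x _ * r), Finset.sum_ite_eq', sq]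
  ring

lemma diag_inv {n : ℕ} (p : Fin (n+1) → ℝ) (hp : ∀ i, 0 < p i) :
    (Matrix.diagonal p)⁻¹ = Matrix.diagonal (fun i => (p i)⁻¹) := by
  apply inv_eq_right_inv
  rw [diagonal_mul_diagonal]
  convert diagonal_one with i
  exact mul_inv_cancel₀ (hp i).ne'

lemma two_quad {n : ℕ} (Q : Matrix (Fin (n+1)) (Fin (n+1)) ℝ)
    (hQ : Q + Qᵀ = sbpBoundaryMatrix n) (x : Fin (n+1) → ℝ) :
    2 * (x ⬝ᵥ (Q *ᵥ x)) = x (Fin.last n)^2 - x 0^2 := by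
  have h1 : x ⬝ᵥ (Qᵀ *ᵥ x) = x ⬝ᵥ (Q *ᵥ x) := by
    rw [dotProduct_mulVec, vecMul_transpose, dotProduct_comm]
  have := congrArg (fun A => x ⬝ᵥ (A *ᵥ x)) hQ
  simp only [add_mulVec, dotProduct_add, h1, sbp_quad] at this
  linarith

theorem sbp_sat_advection_energy_stable
    (N M : ℕ) (a σ : ℝ) (ha : 0 < a) (hσ : σ ≤ a / 2)
    (pL : Fin (N + 1) → ℝ) (hpL : ∀ i, 0 < pL i)
    (QL : Matrix (Fin (N + 1)) (Fin (N + 1)) ℝ)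
    (hQL : QL + QLᵀ = sbpBoundaryMatrix N)
    (pR : Fin (M + 1) → ℝ) (hpR : ∀ i, 0 < pR i)
    (QR : Matrix (Fin (M + 1)) (Fin (M + 1)) ℝ)
    (hQR : QR + QRᵀ = sbpBoundaryMatrix M)
    (u : ℝ → Fin (N + 1) → ℝ) (v : ℝ → Fin (M + 1) → ℝ)
    (hu : ∀ t : ℝ, HasDerivAt u
      ((-a) • ((Matrix.diagonal pL)⁻¹ *ᵥ (QL *ᵥ u t))
        + (σ * (u t (Fin.last N) - v t 0)) •
            ((Matrix.diagonal pL)⁻¹ *ᵥ Pi.single (Fin.last N) 1)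
        - (a * u t 0) • ((Matrix.diagonal pL)⁻¹ *ᵥ Pi.single 0 1)) t)
    (hv : ∀ t : ℝ, HasDerivAt v
      ((-a) • ((Matrix.diagonal pR)⁻¹ *ᵥ (QR *ᵥ v t))
        + ((σ - a) * (v t 0 - u t (Fin.last N))) •
            ((Matrix.diagonal pR)⁻¹ *ᵥ Pi.single 0 1)) t) :
    Antitone (fun t =>
      u t ⬝ᵥ (Matrix.diagonal pL *ᵥ u t) + v t ⬝ᵥ (Matrix.diagonal pR *ᵥ v t)) := by
  set w : ℝ → Fin (N+1) → ℝ := fun t =>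
      ((-a) • ((Matrix.diagonal pL)⁻¹ *ᵥ (QL *ᵥ u t))
        + (σ * (u t (Fin.last N) - v t 0)) •
            ((Matrix.diagonal pL)⁻¹ *ᵥ Pi.single (Fin.last N) 1)
        - (a * u t 0) • ((Matrix.diagonal pL)⁻¹ *ᵥ Pi.single 0 1)) with hw
  set z : ℝ → Fin (M+1) → ℝ := fun t =>
      ((-a) • ((Matrix.diagonal pR)⁻¹ *ᵥ (QR *ᵥ v t))
        + ((σ - a) * (v t 0 - u t (Fin.last N))) •
            ((Matrix.diagonal pR)⁻¹ *ᵥ Pi.single 0 1)) with hz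
  have hwL : ∀ t, (fun i => pL i * w t i) =
      (-a) • (QL *ᵥ u t) + (σ * (u t (Fin.last N) - v t 0)) • (Pi.single (Fin.last N) 1 : Fin (N+1) → ℝ)
        - (a * u t 0) • (Pi.single 0 1 : Fin (N+1) → ℝ) := by
    intro t
    funext i
    have hne := (hpL i).ne'
    simp only [hw, diag_inv pL hpL, Pi.add_apply, Pi.sub_apply, Pi.smul_apply, smul_eq_mul,
      mulVec_diagonal]
    field_simp
  have hzR : ∀ t, (fun i => pR i * z t i) =
      (-a) • (QR *ᵥ v t) + ((σ - a) * (v t 0 - u t (Fin.last N))) • (Pi.single 0 1 : Fin (M+1) → ℝ) := by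
    intro t
    funext i
    have hne := (hpR i).ne'
    simp only [hz, diag_inv pR hpR, Pi.add_apply, Pi.smul_apply, smul_eq_mul, mulVec_diagonal]
    field_simp
  -- derivative of energy
  have hE : ∀ t, HasDerivAt (fun t =>
      u t ⬝ᵥ (Matrix.diagonal pL *ᵥ u t) + v t ⬝ᵥ (Matrix.diagonal pR *ᵥ v t))
      (2 * (u t ⬝ᵥ fun i => pL i * w t i) + 2 * (v t ⬝ᵥ fun i => pR i * z t i)) t := by
    intro t
    have hu' := hasDerivAt_pi.mp (hu t)
    have hv' := hasDerivAt_pi.mp (hv t)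
    have h1 : HasDerivAt (fun t => u t ⬝ᵥ (Matrix.diagonal pL *ᵥ u t))
        (2 * (u t ⬝ᵥ fun i => pL i * w t i)) t := by
      have : HasDerivAt (fun t => ∑ i, u t i * (pL i * u t i))
          (∑ i, (w t i * (pL i * u t i) + u t i * (pL i * w t i))) t := by
        apply HasDerivAt.fun_sum
        intro i _
        exact ((hu' i).mul ((hasDerivAt_const t (pL i)).mul (hu' i))).congr_deriv (by simp only [Pi.mul_apply]; ring)
      convert this using 1
      · ext s; simp [dotProduct, mulVec_diagonal]
      · simp [dotProduct, Finset.mul_sum]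
        congr 1; ext i; ring
    have h2 : HasDerivAt (fun t => v t ⬝ᵥ (Matrix.diagonal pR *ᵥ v t))
        (2 * (v t ⬝ᵥ fun i => pR i * z t i)) t := by
      have : HasDerivAt (fun t => ∑ i, v t i * (pR i * v t i))
          (∑ i, (z t i * (pR i * v t i) + v t i * (pR i * z t i))) t := by
        apply HasDerivAt.fun_sum
        intro i _
        exact ((hv' i).mul ((hasDerivAt_const t (pR i)).mul (hv' i))).congr_deriv (by simp only [Pi.mul_apply]; ring)
      convert this using 1
      · ext s; simp [dotProduct, mulVec_diagonal]
      · simp [dotProduct, Finset.mul_sum]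
        congr 1; ext i; ring
    exact h1.add h2
  apply antitone_of_deriv_nonpos
  · exact fun t => ((hE t).differentiableAt)
  · intro t
    rw [(hE t).deriv]
    have hdL : (u t ⬝ᵥ fun i => pL i * w t i) =
        -a * (u t ⬝ᵥ (QL *ᵥ u t)) + σ * (u t (Fin.last N) - v t 0) * u t (Fin.last N)
          - a * u t 0 * u t 0 := by
      rw [hwL]
      simp only [dotProduct_add, dotProduct_sub, dotProduct_smul, smul_eq_mul, dotProduct_single,
        mul_one]
    have hdR : (v t ⬝ᵥ fun i => pR i * z t i) =
        -a * (v t ⬝ᵥ (QR *ᵥ v t)) + (σ - a) * (v t 0 - u t (Fin.last N)) * v t 0 := by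
      rw [hzR]
      simp only [dotProduct_add, dotProduct_smul, smul_eq_mul, dotProduct_single, mul_one]
    rw [hdL, hdR]
    have hqL := two_quad QL hQL (u t)
    have hqR := two_quad QR hQR (v t)
    nlinarith [sq_nonneg (u t (Fin.last N) - v t 0), sq_nonneg (u t 0), sq_nonneg (v t (Fin.last M)), ha.le, mul_pos ha ha]
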